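/- For a bounded continuous function σ : ℂ → ℝ define the conformal distance d_σ(x,y) = inf over all continuously differentiable paths α : [0,1] → ℂ with α(0) = x and α(1) = y of ∫₀¹ exp(σ(α(t))/2) |α'(t)| dt. Then for every x ∈ ℂ, lim_{y → x, y ≠ x} ( log d_σ(x,y) − log|x − y| ) = σ(x)/2. -/

import Mathlib

open Real Filter Topology

/-- The Riemannian distance of the conformal metric `e^{σ(z)}|dz|²` on the plane:
the infimum of `∫₀¹ e^{σ(α(t))/2} |α'(t)| dt` over `C¹` paths from `x` to `y`. -/
noncomputable def confDist (σ : ℂ → ℝ) (x y : ℂ) : ℝ :=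
  sInf { L : ℝ | ∃ α : ℝ → ℂ, ContDiff ℝ 1 α ∧ α 0 = x ∧ α 1 = y ∧
    L = ∫ t in (0 : ℝ)..1, Real.exp (σ (α t) / 2) * ‖deriv α t‖ }

namespace ConfDistAux

lemma integrand_continuous (σ : ℂ → ℝ) (hσc : Continuous σ) {α : ℝ → ℂ}
    (hα : ContDiff ℝ 1 α) :
    Continuous (fun t => Real.exp (σ (α t) / 2) * ‖deriv α t‖) :=
  (Real.continuous_exp.comp ((hσc.comp hα.continuous).div_const 2)).mul
    (continuous_norm.comp (hα.continuous_deriv le_rfl))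

lemma dist_le_length {α : ℝ → ℂ} (hα : ContDiff ℝ 1 α) {b : ℝ} (hb : 0 ≤ b) :
    ‖α b - α 0‖ ≤ ∫ t in (0:ℝ)..b, ‖deriv α t‖ := by
  have h1 : (∫ t in (0:ℝ)..b, deriv α t) = α b - α 0 :=
    intervalIntegral.integral_deriv_eq_sub (fun t _ => hα.differentiable one_ne_zero t)
      ((hα.continuous_deriv le_rfl).intervalIntegrable _ _)
  rw [← h1]
  calc ‖∫ t in (0:ℝ)..b, deriv α t‖ = ‖∫ t in (0:ℝ)..b, deriv α t‖ :=
        rfl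
    _ ≤ ∫ t in (0:ℝ)..b, ‖deriv α t‖ := intervalIntegral.norm_integral_le_integral_norm hb
    _ = ∫ t in (0:ℝ)..b, ‖deriv α t‖ := by
        rfl

/-- Lower bound on the length integral of a path in terms of constant lower bounds on the
conformal factor. -/
lemma path_lower (σ : ℂ → ℝ) (hσc : Continuous σ) {α : ℝ → ℂ} (hα : ContDiff ℝ 1 α)
    {c C r : ℝ} (hc : 0 ≤ c) (hC : 0 ≤ C) (hr : 0 ≤ r)
    (hglob : ∀ z, C ≤ Real.exp (σ z / 2))
    (hloc : ∀ z ∈ Metric.closedBall (α 0) r, c ≤ Real.exp (σ z / 2)) :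
    min (c * ‖α 1 - α 0‖) (C * r) ≤
      ∫ t in (0:ℝ)..1, Real.exp (σ (α t) / 2) * ‖deriv α t‖ := by
  have hcont := integrand_continuous σ hσc hα
  have hderivc : Continuous (fun t => ‖deriv α t‖) :=
    continuous_norm.comp (hα.continuous_deriv le_rfl)
  by_cases hcase : ∀ t ∈ Set.Icc (0:ℝ) 1, α t ∈ Metric.closedBall (α 0) r
  · refine le_trans (min_le_left _ _) ?_
    calc c * ‖α 1 - α 0‖
        ≤ c * ∫ t in (0:ℝ)..1, ‖deriv α t‖ := by
          have := dist_le_length hα (b := 1) zero_le_one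
          exact mul_le_mul_of_nonneg_left this hc
      _ = ∫ t in (0:ℝ)..1, c * ‖deriv α t‖ := by
          rw [← intervalIntegral.integral_const_mul]
      _ ≤ ∫ t in (0:ℝ)..1, Real.exp (σ (α t) / 2) * ‖deriv α t‖ := by
          apply intervalIntegral.integral_mono_on zero_le_one
            ((continuous_const.mul hderivc).intervalIntegrable _ _)
            (hcont.intervalIntegrable _ _)
          intro t ht
          exact mul_le_mul_of_nonneg_right (hloc _ (hcase t ht)) (norm_nonneg _)
  · push_neg at hcase
    obtain ⟨b, hb, hbout⟩ := hcase
    refine le_trans (min_le_right _ _) ?_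
    have hrb : r ≤ ‖α b - α 0‖ := by
      have := Metric.mem_closedBall.not.mp hbout
      rw [Complex.dist_eq] at this
      linarith [not_le.mp this]
    calc C * r ≤ C * ‖α b - α 0‖ := mul_le_mul_of_nonneg_left hrb hC
      _ ≤ C * ∫ t in (0:ℝ)..b, ‖deriv α t‖ :=
          mul_le_mul_of_nonneg_left (dist_le_length hα hb.1) hC
      _ = ∫ t in (0:ℝ)..b, C * ‖deriv α t‖ := by
          rw [← intervalIntegral.integral_const_mul]
      _ ≤ ∫ t in (0:ℝ)..b, Real.exp (σ (α t) / 2) * ‖deriv α t‖ := by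
          apply intervalIntegral.integral_mono_on hb.1
            ((continuous_const.mul hderivc).intervalIntegrable _ _)
            (hcont.intervalIntegrable _ _)
          intro t _
          exact mul_le_mul_of_nonneg_right (hglob _) (norm_nonneg _)
      _ ≤ ∫ t in (0:ℝ)..1, Real.exp (σ (α t) / 2) * ‖deriv α t‖ := by
          apply intervalIntegral.integral_mono_interval le_rfl hb.1 hb.2
          · filter_upwards with t
            exact mul_nonneg (Real.exp_nonneg _) (norm_nonneg _)
          · exact hcont.intervalIntegrable _ _

lemma line_contDiff (x y : ℂ) : ContDiff ℝ 1 (fun t : ℝ => x + t • (y - x)) :=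
  contDiff_const.add (contDiff_id.smul contDiff_const)

lemma line_deriv (x y : ℂ) (t : ℝ) : deriv (fun t : ℝ => x + t • (y - x)) t = y - x := by
  have h : HasDerivAt (fun t : ℝ => x + t • (y - x)) ((1:ℝ) • (y - x)) t :=
    ((hasDerivAt_id t).smul_const (y - x)).const_add x
  simpa using h.deriv

lemma confDist_mem (σ : ℂ → ℝ) (x y : ℂ) :
    (∫ t in (0:ℝ)..1, Real.exp (σ (x + t • (y - x)) / 2) * ‖y - x‖) ∈
    { L : ℝ | ∃ α : ℝ → ℂ, ContDiff ℝ 1 α ∧ α 0 = x ∧ α 1 = y ∧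
      L = ∫ t in (0 : ℝ)..1, Real.exp (σ (α t) / 2) * ‖deriv α t‖ } := by
  refine ⟨fun t : ℝ => x + t • (y - x), line_contDiff x y, by simp, by simp, ?_⟩
  congr 1
  ext t
  rw [line_deriv]

lemma confDist_bddBelow (σ : ℂ → ℝ) (x y : ℂ) {C r c : ℝ} (hσc : Continuous σ)
    (hc : 0 ≤ c) (hC : 0 ≤ C) (hr : 0 ≤ r)
    (hglob : ∀ z, C ≤ Real.exp (σ z / 2))
    (hloc : ∀ z ∈ Metric.closedBall x r, c ≤ Real.exp (σ z / 2)) :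
    min (c * ‖y - x‖) (C * r) ≤ confDist σ x y := by
  apply le_csInf ⟨_, confDist_mem σ x y⟩
  rintro L ⟨α, hα, h0, h1, rfl⟩
  have := path_lower σ hσc hα hc hC hr hglob (by rw [h0]; exact hloc)
  rwa [h0, h1] at this

lemma confDist_upper (σ : ℂ → ℝ) (hσc : Continuous σ) (x y : ℂ) {c : ℝ}
    (h : ∀ t ∈ Set.Icc (0:ℝ) 1, Real.exp (σ (x + t • (y - x)) / 2) ≤ c) :
    confDist σ x y ≤ c * ‖y - x‖ := by
  have hbdd : BddBelow { L : ℝ | ∃ α : ℝ → ℂ, ContDiff ℝ 1 α ∧ α 0 = x ∧ α 1 = y ∧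
      L = ∫ t in (0 : ℝ)..1, Real.exp (σ (α t) / 2) * ‖deriv α t‖ } := by
    refine ⟨0, ?_⟩
    rintro L ⟨α, hα, h0, h1, rfl⟩
    exact intervalIntegral.integral_nonneg zero_le_one
      (fun t _ => mul_nonneg (Real.exp_nonneg _) (norm_nonneg _))
  refine csInf_le_of_le hbdd (confDist_mem σ x y) ?_
  have hcont : Continuous (fun t : ℝ => Real.exp (σ (x + t • (y - x)) / 2)) :=
    Real.continuous_exp.comp
      ((hσc.comp (line_contDiff x y).continuous).div_const 2)
  calc (∫ t in (0:ℝ)..1, Real.exp (σ (x + t • (y - x)) / 2) * ‖y - x‖)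
      ≤ ∫ t in (0:ℝ)..1, c * ‖y - x‖ := by
        apply intervalIntegral.integral_mono_on zero_le_one
          ((hcont.mul continuous_const).intervalIntegrable _ _)
          (intervalIntegrable_const)
        intro t ht
        exact mul_le_mul_of_nonneg_right (h t ht) (norm_nonneg _)
    _ = c * ‖y - x‖ := by simp

end ConfDistAux

/-- Logarithmic comparison of the conformal distance with the Euclidean distance:
`log d_σ(x,y) - log|x-y| → σ(x)/2` as `y → x`. -/
theorem confDist_log_limit
    (σ : ℂ → ℝ) (hσc : Continuous σ) (hσb : ∃ M : ℝ, ∀ z, |σ z| ≤ M) (x : ℂ) :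
    Tendsto (fun y => Real.log (confDist σ x y) - Real.log (‖x - y‖))
      (𝓝[≠] x) (𝓝 (σ x / 2)) := by
  obtain ⟨M, hM⟩ := hσb
  have hglob : ∀ z, Real.exp (-M / 2) ≤ Real.exp (σ z / 2) := fun z => by
    apply Real.exp_le_exp.mpr
    have := abs_le.mp (hM z)
    linarith [this.1]
  rw [Metric.tendsto_nhds]
  intro ε hε
  -- choose r so that |σ z - σ x| ≤ ε on closedBall x r
  obtain ⟨δ, hδ, hδσ⟩ := Metric.continuousAt_iff.mp hσc.continuousAt ε hε
  set r := δ / 2 with hrdef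
  have hr : 0 < r := by positivity
  have hball : ∀ z ∈ Metric.closedBall x r, |σ z - σ x| ≤ ε := by
    intro z hz
    have : dist z x < δ := lt_of_le_of_lt (Metric.mem_closedBall.mp hz) (by linarith)
    have := hδσ this
    rw [Real.dist_eq] at this
    exact this.le
  set c₁ := Real.exp ((σ x - ε) / 2) with hc₁
  set c₂ := Real.exp ((σ x + ε) / 2) with hc₂
  have hc₁pos : 0 < c₁ := Real.exp_pos _
  have hloc : ∀ z ∈ Metric.closedBall x r, c₁ ≤ Real.exp (σ z / 2) := by
    intro z hz
    apply Real.exp_le_exp.mpr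
    have := abs_le.mp (hball z hz)
    linarith [this.1]
  set κ := Real.exp (-M / 2) * r with hκ
  have hκpos : 0 < κ := mul_pos (Real.exp_pos _) hr
  set δ' := min r (κ / c₁) with hδ'
  have hδ'pos : 0 < δ' := lt_min hr (by positivity)
  have hev : ∀ᶠ y in 𝓝[≠] x, dist y x < δ' ∧ y ≠ x := by
    filter_upwards [eventually_nhdsWithin_of_eventually_nhds
      (Metric.ball_mem_nhds x hδ'pos : ∀ᶠ y in 𝓝 x, y ∈ Metric.ball x δ'),
      eventually_mem_nhdsWithin] with y h1 h2
    exact ⟨Metric.mem_ball.mp h1, h2⟩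
  filter_upwards [hev] with y ⟨hy, hyne⟩
  have hyx : (0:ℝ) < ‖y - x‖ := by
    rw [← Complex.dist_eq]
    exact dist_pos.mpr hyne
  -- lower bound
  have hlow : c₁ * ‖y - x‖ ≤ confDist σ x y := by
    have h1 := ConfDistAux.confDist_bddBelow σ x y hσc hc₁pos.le (Real.exp_nonneg _) hr.le
      hglob hloc
    have h2 : c₁ * ‖y - x‖ ≤ κ := by
      have : ‖y - x‖ ≤ κ / c₁ := by
        rw [← Complex.dist_eq]
        exact le_trans hy.le (min_le_right _ _)
      calc c₁ * ‖y - x‖ ≤ c₁ * (κ / c₁) :=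
            mul_le_mul_of_nonneg_left this hc₁pos.le
        _ = κ := by field_simp
    rwa [min_eq_left (h2.trans_eq (by rw [hκ]))] at h1
  -- upper bound
  have hupp : confDist σ x y ≤ c₂ * ‖y - x‖ := by
    apply ConfDistAux.confDist_upper σ hσc
    intro t ht
    apply Real.exp_le_exp.mpr
    have hmem : x + t • (y - x) ∈ Metric.closedBall x r := by
      rw [Metric.mem_closedBall, Complex.dist_eq]
      rw [add_sub_cancel_left]
      calc ‖t • (y - x)‖ = |t| * ‖y - x‖ := by
            simp [Complex.real_smul, abs_mul, Complex.norm_real]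
        _ ≤ 1 * ‖y - x‖ := by
            apply mul_le_mul_of_nonneg_right _ (norm_nonneg _)
            rw [abs_le]; exact ⟨by linarith [ht.1], ht.2⟩
        _ = ‖y - x‖ := one_mul _
        _ ≤ r := le_trans (by rw [← Complex.dist_eq]; exact hy.le) (min_le_left _ _)
    have := abs_le.mp (hball _ hmem)
    linarith [this.2]
  have hcd : 0 < confDist σ x y := lt_of_lt_of_le (by positivity) hlow
  have hxy : ‖x - y‖ = ‖y - x‖ := norm_sub_rev x y
  rw [Real.dist_eq, hxy]
  have hlog1 : Real.log (confDist σ x y) - Real.log (‖y - x‖) ≤ (σ x + ε) / 2 := by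
    have := Real.log_le_log hcd hupp
    rw [Real.log_mul (Real.exp_ne_zero _) hyx.ne', Real.log_exp] at this
    linarith
  have hlog2 : (σ x - ε) / 2 ≤ Real.log (confDist σ x y) - Real.log (‖y - x‖) := by
    have := Real.log_le_log (by positivity) hlow
    rw [Real.log_mul (Real.exp_ne_zero _) hyx.ne', Real.log_exp] at this
    linarith
  rw [abs_lt]
  constructor <;> [linarith; linarith]
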